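/- For any integers (or elements of a commutative ring) $k_1,\dots,k_{n+1}$, the elementary symmetric polynomial identity $s_n(2k_1+1,\dots,2k_{n+1}+1) = \sum_{m=0}^{n} 2^m (n+1-m)\, s_m(k_1,\dots,k_{n+1})$ holds, where $s_m$ denotes the $m$-th elementary symmetric polynomial. -/

import Mathlib

/-- The `m`-th elementary symmetric polynomial in the variables `x 0, …, x (N-1)`. -/
def esymm {R : Type*} [CommRing R] (N m : ℕ) (x : ℕ → R) : R :=
  ∑ t ∈ (Finset.range N).powersetCard m, ∏ j ∈ t, x j

open Finset in
lemma count_supersets (n : ℕ) (s : Finset ℕ) (hs : s ⊆ Finset.range (n + 1)) :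
    (((Finset.range (n + 1)).powersetCard n).filter (fun t => s ⊆ t)).card
      = n + 1 - s.card := by
  by_cases hm : s.card ≤ n
  · have hbij : (((Finset.range (n + 1)).powersetCard n).filter (fun t => s ⊆ t)).card
        = ((Finset.range (n + 1) \ s).powersetCard (n - s.card)).card := by
      apply Finset.card_bij' (fun t _ => t \ s) (fun t' _ => t' ∪ s)
      · intro t ht
        simp only [mem_filter, mem_powersetCard] at ht
        obtain ⟨⟨htu, htc⟩, hst⟩ := ht
        simp only [mem_powersetCard]
        constructor
        · exact sdiff_subset_sdiff htu (le_refl s)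
        · rw [card_sdiff_of_subset hst, htc]
      · intro t' ht'
        simp only [mem_powersetCard] at ht'
        obtain ⟨ht'u, ht'c⟩ := ht'
        have hdisj : Disjoint t' s := by
          exact disjoint_of_subset_left ht'u sdiff_disjoint
        simp only [mem_filter, mem_powersetCard]
        refine ⟨⟨?_, ?_⟩, subset_union_right⟩
        · exact union_subset ((ht'u.trans (sdiff_subset))) hs
        · rw [card_union_of_disjoint hdisj, ht'c]
          omega
      · intro t ht
        simp only [mem_filter, mem_powersetCard] at ht
        exact sdiff_union_of_subset ht.2
      · intro t' ht'
        simp only [mem_powersetCard] at ht'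
        have hdisj : Disjoint t' s := disjoint_of_subset_left ht'.1 sdiff_disjoint
        rw [union_sdiff_right, sdiff_eq_self_of_disjoint hdisj]
    rw [hbij, Finset.card_powersetCard, card_sdiff_of_subset hs, Finset.card_range]
    have h1 : n + 1 - s.card = (n - s.card) + 1 := by omega
    rw [h1, Nat.choose_succ_self_right]
  · have hcard : s.card = n + 1 := by
      have := Finset.card_le_card hs
      simp only [Finset.card_range] at this
      omega
    have : (((Finset.range (n + 1)).powersetCard n).filter (fun t => s ⊆ t)) = ∅ := by
      apply Finset.filter_false_of_mem
      intro t ht hst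
      simp only [mem_powersetCard] at ht
      have := Finset.card_le_card hst
      omega
    rw [this]
    simp
    omega

open Finset in
/-- `s_n(2k_1+1, …, 2k_{n+1}+1) = ∑_{m=0}^{n} 2^m (n+1-m) s_m(k_1, …, k_{n+1})`. -/
theorem esymm_two_mul_add_one {R : Type*} [CommRing R] (n : ℕ) (k : ℕ → R) :
    esymm (n + 1) n (fun i => 2 * k i + 1)
      = ∑ m ∈ Finset.range (n + 1), 2 ^ m * ((n + 1 - m : ℕ) : R) * esymm (n + 1) m k := by
  classical
  unfold esymm
  -- Step 1: expand each product
  have step1 : ∀ t : Finset ℕ,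
      (∏ j ∈ t, (2 * k j + 1)) = ∑ s ∈ t.powerset, 2 ^ s.card * ∏ j ∈ s, k j := by
    intro t
    rw [Finset.prod_add]
    apply Finset.sum_congr rfl
    intro s _
    rw [Finset.prod_const_one, mul_one, Finset.prod_mul_distrib, Finset.prod_const]
  simp_rw [step1]
  -- Step 2: swap the two sums
  rw [Finset.sum_comm' (t' := (Finset.range (n + 1)).powerset)
      (s' := fun s => ((Finset.range (n + 1)).powersetCard n).filter (fun t => s ⊆ t))
      (by
        intro t s
        simp only [mem_powersetCard, mem_powerset, mem_filter]
        tauto)]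
  -- inner sums are constant
  have step2 : ∀ s ∈ (Finset.range (n + 1)).powerset,
      (∑ _t ∈ ((Finset.range (n + 1)).powersetCard n).filter (fun t => s ⊆ t),
        (2 ^ s.card * ∏ j ∈ s, k j))
      = ((n + 1 - s.card : ℕ) : R) * (2 ^ s.card * ∏ j ∈ s, k j) := by
    intro s hs
    rw [Finset.sum_const, count_supersets n s (Finset.mem_powerset.mp hs), nsmul_eq_mul]
  rw [Finset.sum_congr rfl step2]
  -- Step 3: group by cardinality
  erw [Finset.powerset_card_disjiUnion, Finset.sum_disjiUnion]
  rw [Finset.card_range, Finset.sum_range_succ]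
  have hlast : (∑ s ∈ (Finset.range (n + 1)).powersetCard (n + 1),
      ((n + 1 - s.card : ℕ) : R) * (2 ^ s.card * ∏ j ∈ s, k j)) = 0 := by
    apply Finset.sum_eq_zero
    intro s hs
    rw [(Finset.mem_powersetCard.mp hs).2]
    simp
  rw [hlast, add_zero]
  apply Finset.sum_congr rfl
  intro m _
  rw [Finset.mul_sum]
  apply Finset.sum_congr rfl
  intro s hs
  rw [(Finset.mem_powersetCard.mp hs).2]
  ring
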